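/- arXiv:2504.09678 — 3 statements merged into one kernel-verified Lean document; each statement's English description precedes it below -/
import Mathlib

section
/- Let Γ = (V, H, s, ι, σ) be a ribbon graph (H a finite set of half-edges, s : H → V, ι a fixed-point-free involution on H, σ a permutation of H whose orbits are the fibers of s). If the underlying multigraph, with edge set the orbits {h, ι(h)} of ι, is a tree (connected and acyclic), then the permutation ι ∘ σ of H is a single cycle of length |H|. -/
set_option linter.unusedSectionVars false


/-- A ribbon graph: a finite set `V` of vertices, a finite set `H` of half-edges,
an incidence map `s : H → V`, a fixed-point-free involution `ι` pairing half-edges into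
edges, and a permutation `σ` whose orbits are exactly the fibers of `s`. -/
structure RibbonGraph (V H : Type) where
  s : H → V
  ι : Equiv.Perm H
  σ : Equiv.Perm H
  ι_invol : ∀ h, ι (ι h) = h
  ι_ne : ∀ h, ι h ≠ h
  orbit_fiber : ∀ g h, σ.SameCycle g h ↔ s g = s h

/-- The underlying multigraph of a ribbon graph, as a simple graph: `v` is adjacent to `w`
iff some edge `{h, ι h}` joins them. -/
def RibbonGraph.underlying {V H : Type} (r : RibbonGraph V H) : SimpleGraph V :=
  SimpleGraph.fromRel (fun v w => ∃ h, r.s h = v ∧ r.s (r.ι h) = w)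

/-- The underlying multigraph of the ribbon graph is a tree: the underlying simple graph is
connected and acyclic, there are no loops, and no two distinct edges have the same pair of
endpoints. -/
def RibbonGraph.IsTreeRibbon {V H : Type} (r : RibbonGraph V H) : Prop :=
  r.underlying.IsTree ∧ (∀ h, r.s h ≠ r.s (r.ι h)) ∧
    ∀ g h, r.s g = r.s h → r.s (r.ι g) = r.s (r.ι h) → g = h ∨ g = r.ι h

open SimpleGraph in
/-- In an acyclic graph, the set of vertices beyond the edge `wu` is strictly contained
in the set of vertices beyond the edge `vw`. -/
lemma TreeRibbon.ssubset_aux {V : Type} [DecidableEq V] {G : SimpleGraph V}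
    (hac : G.IsAcyclic) {v w u : V} (hvw : G.Adj v w) (hwu : G.Adj w u) (huv : u ≠ v) :
    {x | (G.deleteEdges {s(w,u)}).Reachable u x} ⊂
      {x | (G.deleteEdges {s(v,w)}).Reachable w x} := by
  have bridge : ∀ {a b : V}, G.Adj a b → ¬ (G.deleteEdges {s(a,b)}).Reachable a b := by
    intro a b hab
    have := (SimpleGraph.isAcyclic_iff_forall_adj_isBridge.mp hac) hab
    rw [SimpleGraph.isBridge_iff] at this
    exact this
  constructor
  · intro x hx
    obtain ⟨p⟩ := hx
    have hw : w ∉ p.support := by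
      intro hw
      exact bridge hwu ((SimpleGraph.Reachable.symm ⟨p.takeUntil w hw⟩))
    have hedges : ∀ ed ∈ p.edges, ed ∈ (G.deleteEdges {s(v,w)}).edgeSet := by
      intro ed hed
      have h1 : ed ∈ (G.deleteEdges {s(w,u)}).edgeSet := p.edges_subset_edgeSet hed
      rw [SimpleGraph.edgeSet_deleteEdges] at h1 ⊢
      refine ⟨h1.1, ?_⟩
      simp only [Set.mem_singleton_iff]
      rintro rfl
      exact hw (p.snd_mem_support_of_mem_edges hed)
    have hadj : (G.deleteEdges {s(v,w)}).Adj w u := by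
      rw [SimpleGraph.deleteEdges_adj]
      refine ⟨hwu, ?_⟩
      simp only [Set.mem_singleton_iff]
      intro hr
      rw [Sym2.eq_iff] at hr
      rcases hr with ⟨h1, _⟩ | ⟨_, h2⟩
      · exact hvw.ne' h1
      · exact huv h2
    exact ⟨SimpleGraph.Walk.cons hadj (p.transfer _ hedges)⟩
  · intro hsub
    have hw : w ∈ {x | (G.deleteEdges {s(v,w)}).Reachable w x} := SimpleGraph.Reachable.refl w
    have := hsub hw
    exact bridge hwu (this.symm)

namespace TreeRibbon

variable {V H : Type} [Fintype V] [Fintype H] [DecidableEq V] [DecidableEq H]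

/-- measure: number of vertices reachable beyond the edge of `h`, from the far side. -/
noncomputable def mu (r : RibbonGraph V H) (h : H) : ℕ :=
  Set.ncard {x : V | (r.underlying.deleteEdges {s(r.s h, r.s (r.ι h))}).Reachable (r.s (r.ι h)) x}

lemma s_pow (r : RibbonGraph V H) (h : H) (i : ℕ) : r.s ((r.σ ^ i) h) = r.s h :=
  ((r.orbit_fiber h ((r.σ ^ i) h)).mp ⟨(i : ℤ), by rw [zpow_natCast]⟩).symm

lemma s_sigma (r : RibbonGraph V H) (h : H) : r.s (r.σ h) = r.s h := by
  simpa using s_pow r h 1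

lemma adj_underlying (r : RibbonGraph V H) (ht : r.IsTreeRibbon) (h : H) :
    r.underlying.Adj (r.s h) (r.s (r.ι h)) := by
  rw [RibbonGraph.underlying, SimpleGraph.fromRel_adj]
  exact ⟨ht.2.1 h, Or.inl ⟨h, rfl, rfl⟩⟩

lemma mu_lt (r : RibbonGraph V H) (ht : r.IsTreeRibbon) {h h' : H}
    (hs : r.s h' = r.s (r.ι h)) (hne : h' ≠ r.ι h) : mu r h' < mu r h := by
  have hne' : h' ≠ h := by
    intro heq; rw [heq] at hs; exact ht.2.1 h hs
  have huv : r.s (r.ι h') ≠ r.s h := by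
    intro heq
    have := ht.2.2 h' (r.ι h) hs (by rw [r.ι_invol h, heq])
    rcases this with h1 | h1
    · exact hne h1
    · rw [r.ι_invol h] at h1; exact hne' h1
  have hsub := TreeRibbon.ssubset_aux (G := r.underlying) ht.1.2
    (adj_underlying r ht h) (hs ▸ adj_underlying r ht h') huv
  have hfin : {x | (r.underlying.deleteEdges
      {s(r.s h, r.s (r.ι h))}).Reachable (r.s (r.ι h)) x}.Finite := Set.toFinite _
  have := Set.ncard_lt_ncard hsub hfin
  unfold mu
  rw [hs]
  exact this

lemma mu_pos (r : RibbonGraph V H) (h : H) : 0 < mu r h := by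
  rw [mu, Set.ncard_pos (Set.toFinite _)]
  exact ⟨r.s (r.ι h), SimpleGraph.Reachable.refl _⟩

lemma key (r : RibbonGraph V H) (ht : r.IsTreeRibbon) :
    ∀ h : H, ∃ k : ℕ, ((r.ι * r.σ) ^ k) (r.ι h) = h := by
  suffices main : ∀ N h, mu r h ≤ N → ∃ k : ℕ, ((r.ι * r.σ) ^ k) (r.ι h) = h by
    exact fun h => main (mu r h) h le_rfl
  intro N
  induction N with
  | zero => exact fun h hh => absurd (Nat.le_zero.mp hh) (Nat.pos_iff_ne_zero.mp (mu_pos r h))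
  | succ N IH =>
    intro h hμ
    set n := orderOf r.σ with hn
    have hnpos : 0 < n := orderOf_pos r.σ
    have hσn : (r.σ ^ n) (r.ι h) = r.ι h := by
      rw [pow_orderOf_eq_one]; rfl
    have step : ∀ j, (r.ι * r.σ) ((r.σ ^ j) (r.ι h)) = r.ι ((r.σ ^ (j+1)) (r.ι h)) := by
      intro j
      rw [Equiv.Perm.mul_apply, pow_succ', Equiv.Perm.mul_apply]
    have Q : ∀ d j, j + d = n - 1 → ∃ k : ℕ, ((r.ι * r.σ) ^ k) ((r.σ ^ j) (r.ι h)) = h := by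
      intro d
      induction d with
      | zero =>
        intro j hj
        refine ⟨1, ?_⟩
        have hj1 : j + 1 = n := by omega
        rw [pow_one, step j, hj1, hσn, r.ι_invol]
      | succ d IHd =>
        intro j hj
        by_cases hc : (r.σ ^ (j+1)) (r.ι h) = r.ι h
        · exact ⟨1, by rw [pow_one, step j, hc, r.ι_invol]⟩
        · set h' := (r.σ ^ (j+1)) (r.ι h) with hh'
          have hs' : r.s h' = r.s (r.ι h) := s_pow r (r.ι h) (j+1)
          have hmu : mu r h' < mu r h := mu_lt r ht hs' hc
          obtain ⟨k₁, hk₁⟩ := IH h' (by omega)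
          obtain ⟨k₂, hk₂⟩ := IHd (j+1) (by omega)
          refine ⟨k₂ + (k₁ + 1), ?_⟩
          rw [pow_add, Equiv.Perm.mul_apply, pow_succ, Equiv.Perm.mul_apply, step j, ← hh',
            hk₁, hk₂]
    have := Q (n - 1) 0 (by omega)
    simpa using this

lemma samecycle_iota (r : RibbonGraph V H) (ht : r.IsTreeRibbon) (h : H) :
    (r.ι * r.σ).SameCycle (r.ι h) h := by
  obtain ⟨k, hk⟩ := key r ht h
  exact ⟨(k : ℤ), by rw [zpow_natCast]; exact hk⟩

lemma samecycle_sigma (r : RibbonGraph V H) (ht : r.IsTreeRibbon) (h : H) :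
    (r.ι * r.σ).SameCycle h (r.σ h) := by
  have h1 : (r.ι * r.σ).SameCycle h ((r.ι * r.σ) h) := ⟨1, by simp⟩
  have h2 : (r.ι * r.σ).SameCycle (r.ι ((r.ι * r.σ) h)) ((r.ι * r.σ) h) :=
    samecycle_iota r ht _
  have h3 : r.ι ((r.ι * r.σ) h) = r.σ h := by
    rw [Equiv.Perm.mul_apply, r.ι_invol]
  rw [h3] at h2
  exact h1.trans h2.symm

lemma samecycle_fiber (r : RibbonGraph V H) (ht : r.IsTreeRibbon) {g h : H}
    (hs : r.s g = r.s h) : (r.ι * r.σ).SameCycle g h := by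
  obtain ⟨i, hlt, hi⟩ := Equiv.Perm.SameCycle.exists_pow_eq' ((r.orbit_fiber g h).mpr hs)
  subst hi
  clear hs hlt
  induction i with
  | zero => exact Equiv.Perm.SameCycle.refl _ _
  | succ i IHi =>
    have : (r.σ ^ (i+1)) g = r.σ ((r.σ ^ i) g) := by
      rw [pow_succ', Equiv.Perm.mul_apply]
    rw [this]
    exact IHi.trans (samecycle_sigma r ht _)

lemma walk_samecycle (r : RibbonGraph V H) (ht : r.IsTreeRibbon) :
    ∀ {a b : V} (_ : r.underlying.Walk a b) (g g' : H), r.s g = a → r.s g' = b →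
      (r.ι * r.σ).SameCycle g g' := by
  intro a b p
  induction p with
  | nil =>
    intro g g' hg hg'
    exact samecycle_fiber r ht (by rw [hg, hg'])
  | @cons a c b hadj p IHp =>
    intro g g' hg hg'
    rw [RibbonGraph.underlying, SimpleGraph.fromRel_adj] at hadj
    obtain ⟨hne, hcase⟩ := hadj
    obtain ⟨h₁, hh₁, hh₂⟩ : ∃ h₁, r.s h₁ = a ∧ r.s (r.ι h₁) = c := by
      rcases hcase with ⟨h₁, h1, h2⟩ | ⟨h₁, h1, h2⟩
      · exact ⟨h₁, h1, h2⟩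
      · exact ⟨r.ι h₁, h2, by rw [r.ι_invol]; exact h1⟩
    have c1 : (r.ι * r.σ).SameCycle g h₁ := samecycle_fiber r ht (by rw [hg, hh₁])
    have c2 : (r.ι * r.σ).SameCycle h₁ (r.ι h₁) := (samecycle_iota r ht h₁).symm
    have c3 : (r.ι * r.σ).SameCycle (r.ι h₁) g' := IHp (r.ι h₁) g' hh₂ hg'
    exact (c1.trans c2).trans c3

end TreeRibbon

/-- If the underlying multigraph of a ribbon graph `(V, H, s, ι, σ)` (with at
least one half-edge) is a tree, then the permutation `ι ∘ σ` of `H` is a single cycle of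
length `|H|` (it is a cycle whose support is all of `H`). -/
theorem tree_ribbon_single_green_walk {V H : Type} [Fintype V] [Fintype H]
    [DecidableEq V] [DecidableEq H] [Nonempty H]
    (r : RibbonGraph V H) (htree : r.IsTreeRibbon) :
    (r.ι * r.σ).IsCycle ∧ (r.ι * r.σ).support = Finset.univ := by
  have hfix : ∀ x : H, (r.ι * r.σ) x ≠ x := by
    intro x heq
    rw [Equiv.Perm.mul_apply] at heq
    have : r.σ x = r.ι x := by
      have := congrArg r.ι heq
      rwa [r.ι_invol] at this
    have hs1 : r.s (r.σ x) = r.s x := TreeRibbon.s_sigma r x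
    rw [this] at hs1
    exact htree.2.1 x hs1.symm
  constructor
  · obtain ⟨h₀⟩ := ‹Nonempty H›
    refine ⟨h₀, hfix h₀, ?_⟩
    intro y _
    have hreach : r.underlying.Reachable (r.s h₀) (r.s y) :=
      htree.1.1.preconnected (r.s h₀) (r.s y)
    obtain ⟨p⟩ := hreach
    exact TreeRibbon.walk_samecycle r htree p h₀ y rfl rfl
  · rw [Finset.eq_univ_iff_forall]
    intro x
    rw [Equiv.Perm.mem_support]
    exact hfix x
end

section
/- Let Γ = (V, H, s, ι, σ) be a ribbon graph whose underlying multigraph is a tree with edge set E. Then the permutation (ι ∘ σ)² of H has exactly two orbits, each of cardinality |E|. -/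
section Aux
variable {V H : Type} [Fintype V] [Fintype H] [DecidableEq V] [DecidableEq H]

lemma RibbonGraph.s_sigma (r : RibbonGraph V H) (x : H) : r.s (r.σ x) = r.s x :=
  (r.orbit_fiber (r.σ x) x).mp ⟨-1, by simp⟩

lemma RibbonGraph.parity (r : RibbonGraph V H) (htree : r.IsTreeRibbon) (a h₀ : H) :
    (r.ι * r.σ).SameCycle a h₀ ↔ (r.ι * r.σ).SameCycle a (r.ι h₀) := by
  classical
  set τ := r.ι * r.σ with hτdef
  have hτ : ∀ x, τ x = r.ι (r.σ x) := fun x => rfl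
  set u := r.s h₀ with hu
  set w := r.s (r.ι h₀) with hw
  have huw : u ≠ w := htree.2.1 h₀
  have hadj : r.underlying.Adj u w := by
    rw [RibbonGraph.underlying, SimpleGraph.fromRel_adj]
    exact ⟨huw, Or.inl ⟨h₀, rfl, rfl⟩⟩
  set G' := r.underlying \ SimpleGraph.fromEdgeSet {s(u, w)} with hG'
  have hbridge : ¬ G'.Reachable u w := by
    have hb := (SimpleGraph.isAcyclic_iff_forall_adj_isBridge.mp htree.1.IsAcyclic) hadj
    exact SimpleGraph.isBridge_iff.mp hb
  set χ : V → ZMod 2 := fun v => if G'.Reachable u v then 1 else 0 with hχ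
  have hχu : χ u = 1 := if_pos (SimpleGraph.Reachable.refl u)
  have hχw : χ w = 0 := if_neg hbridge
  have hedge : ∀ g : H, g ≠ h₀ → g ≠ r.ι h₀ → χ (r.s g) = χ (r.s (r.ι g)) := by
    intro g hg1 hg2
    have hne : r.s g ≠ r.s (r.ι g) := htree.2.1 g
    have hGadj : r.underlying.Adj (r.s g) (r.s (r.ι g)) := by
      rw [RibbonGraph.underlying, SimpleGraph.fromRel_adj]
      exact ⟨hne, Or.inl ⟨g, rfl, rfl⟩⟩
    have hnotE : ¬ (s(r.s g, r.s (r.ι g)) = s(u, w)) := by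
      intro hc
      rw [Sym2.eq_iff] at hc
      rcases hc with ⟨h1, h2⟩ | ⟨h1, h2⟩
      · rcases htree.2.2 g h₀ h1 h2 with rfl | rfl
        · exact hg1 rfl
        · exact hg2 rfl
      · have := htree.2.2 (r.ι g) h₀ h2 (by rw [r.ι_invol]; exact h1)
        rcases this with h | h
        · exact hg2 (by rw [← h, r.ι_invol])
        · exact hg1 (r.ι.injective h)
    have hG'adj : G'.Adj (r.s g) (r.s (r.ι g)) := by
      rw [hG', SimpleGraph.sdiff_adj, SimpleGraph.fromEdgeSet_adj]
      exact ⟨hGadj, fun hc => hnotE (by simpa using hc.1)⟩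
    have hiff : G'.Reachable u (r.s g) ↔ G'.Reachable u (r.s (r.ι g)) :=
      ⟨fun h => h.trans hG'adj.reachable, fun h => h.trans hG'adj.symm.reachable⟩
    exact if_congr hiff rfl rfl
  set δ : H → ZMod 2 := fun y => if y = h₀ ∨ y = r.ι h₀ then 1 else 0 with hδ
  have key : ∀ x : H, χ (r.s (τ x)) + χ (r.s x) = δ (τ x) := by
    intro x
    have hsx : r.s x = r.s (r.σ x) := (r.s_sigma x).symm
    by_cases h1 : r.σ x = h₀
    · have hτx : τ x = r.ι h₀ := by rw [hτ, h1]
      rw [hτx, hsx, h1, ← hw, ← hu, hχw, hχu, hδ]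
      simp [r.ι_ne h₀]
    · by_cases h2 : r.σ x = r.ι h₀
      · have hτx : τ x = h₀ := by rw [hτ, h2, r.ι_invol]
        rw [hτx, hsx, h2, ← hw, ← hu, hχw, hχu, hδ]
        simp
      · have hne1 : τ x ≠ h₀ := fun hc => h2 (by have hc2 := congrArg r.ι hc; rw [hτ, r.ι_invol] at hc2; exact hc2)
        have hne2 : τ x ≠ r.ι h₀ := fun hc => h1 (r.ι.injective hc)
        have hδ0 : δ (τ x) = 0 := by rw [hδ]; simp [hne1, hne2]
        have : χ (r.s (τ x)) = χ (r.s x) := by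
          rw [hτ, hsx]
          exact (hedge (r.σ x) h1 h2).symm
        rw [hδ0, this]
        exact CharTwo.add_self_eq_zero _
  set O : Finset H := Finset.univ.filter (fun y => τ.SameCycle a y) with hO
  have hmem : ∀ y, y ∈ O ↔ τ.SameCycle a y := by intro y; simp [hO]
  have hτO : ∀ x ∈ O, τ x ∈ O := by
    intro x hx
    rw [hmem] at hx ⊢
    exact hx.apply_right
  have himg : O.image τ = O := by
    apply Finset.eq_of_subset_of_card_le
    · intro y hy
      obtain ⟨x, hx, rfl⟩ := Finset.mem_image.mp hy
      exact hτO x hx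
    · rw [Finset.card_image_of_injective _ τ.injective]
  have hshift : ∀ f : H → ZMod 2, ∑ x ∈ O, f (τ x) = ∑ y ∈ O, f y := by
    intro f
    conv_rhs => rw [← himg]
    rw [Finset.sum_image (fun x _ y _ h => τ.injective h)]
  have hsum : ∑ y ∈ O, δ y = 0 := by
    have h1 : ∑ x ∈ O, (χ (r.s (τ x)) + χ (r.s x)) = ∑ x ∈ O, δ (τ x) :=
      Finset.sum_congr rfl (fun x _ => key x)
    rw [Finset.sum_add_distrib, hshift (fun y => χ (r.s y)), hshift δ] at h1
    rw [← h1, CharTwo.add_self_eq_zero]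
  have hδsplit : ∀ y : H, δ y = (if y = h₀ then (1 : ZMod 2) else 0) + (if y = r.ι h₀ then 1 else 0) := by
    intro y
    rw [hδ]
    by_cases e1 : y = h₀
    · subst e1; simp [Ne.symm (r.ι_ne y)]
    · by_cases e2 : y = r.ι h₀ <;> simp [e1, e2, r.ι_ne h₀]
  rw [Finset.sum_congr rfl (fun y _ => hδsplit y), Finset.sum_add_distrib,
    Finset.sum_ite_eq' O h₀ (fun _ => (1 : ZMod 2)),
    Finset.sum_ite_eq' O (r.ι h₀) (fun _ => (1 : ZMod 2))] at hsum
  constructor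
  · intro h
    rw [← hmem] at h
    rw [← hmem]
    by_contra hc
    rw [if_pos h, if_neg hc] at hsum
    simp at hsum
  · intro h
    rw [← hmem] at h
    rw [← hmem]
    by_contra hc
    rw [if_neg hc, if_pos h] at hsum
    simp at hsum

end Aux

section Aux2
variable {V H : Type} [Fintype V] [Fintype H] [DecidableEq V] [DecidableEq H]

lemma RibbonGraph.sameCycle_all (r : RibbonGraph V H) (htree : r.IsTreeRibbon) (a b : H) :
    (r.ι * r.σ).SameCycle a b := by
  classical
  set τ := r.ι * r.σ with hτdef
  have hτ : ∀ x, τ x = r.ι (r.σ x) := fun x => rfl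
  set O : Set H := {y | τ.SameCycle a y} with hO
  have ha : a ∈ O := Equiv.Perm.SameCycle.refl τ a
  have hι : ∀ y ∈ O, r.ι y ∈ O := fun y hy => (r.parity htree a y).mp hy
  have hτmem : ∀ y ∈ O, τ y ∈ O := fun y hy => hy.apply_right
  have hσ : ∀ y ∈ O, r.σ y ∈ O := by
    intro y hy
    have h1 : r.σ y = r.ι (τ y) := by rw [hτ, r.ι_invol]
    rw [h1]
    exact hι _ (hτmem _ hy)
  have hpow : ∀ (n : ℕ) (x : H), x ∈ O → (r.σ ^ n) x ∈ O := by
    intro n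
    induction n with
    | zero => intro x hx; simpa using hx
    | succ n ih =>
      intro x hx
      rw [pow_succ, Equiv.Perm.mul_apply]
      exact ih _ (hσ x hx)
  have hfiber : ∀ x ∈ O, ∀ y, r.s y = r.s x → y ∈ O := by
    intro x hx y hsy
    have hsc : r.σ.SameCycle x y := (r.orbit_fiber x y).mpr hsy.symm
    obtain ⟨n, -, hn⟩ := hsc.exists_pow_eq'
    rw [← hn]
    exact hpow n x hx
  have hstep : ∀ v v', r.underlying.Adj v v' →
      (∀ y, r.s y = v → y ∈ O) → (∀ y, r.s y = v' → y ∈ O) := by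
    intro v v' hadj hv y hy
    rw [RibbonGraph.underlying, SimpleGraph.fromRel_adj] at hadj
    rcases hadj.2 with ⟨h, hh1, hh2⟩ | ⟨h, hh1, hh2⟩
    · exact hfiber _ (hι h (hv h hh1)) y (by rw [hy, hh2])
    · have h1 : r.ι h ∈ O := hv _ hh2
      have hhO : h ∈ O := by rw [← r.ι_invol h]; exact hι _ h1
      exact hfiber _ hhO y (by rw [hy, hh1])
  have hwalk : ∀ (x y : V) (p : r.underlying.Walk x y),
      (∀ z, r.s z = x → z ∈ O) → ∀ z, r.s z = y → z ∈ O := by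
    intro x y p
    induction p with
    | nil => exact fun h => h
    | cons hadj q ih => intro hx; exact ih (hstep _ _ hadj hx)
  obtain ⟨p⟩ := htree.1.isConnected.preconnected (r.s a) (r.s b)
  exact hwalk _ _ p (fun z hz => hfiber a ha z hz) b rfl

end Aux2

/-- If the underlying multigraph of a ribbon graph `(V, H, s, ι, σ)` (with at
least one half-edge) is a tree with edge set `E` (so `|H| = 2|E|`), then the permutation
`(ι ∘ σ)²` of `H` has exactly two orbits, each of cardinality `|E|`. -/
theorem tree_ribbon_two_double_stepped_green_walks {V H : Type} [Fintype V] [Fintype H]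
    [DecidableEq V] [DecidableEq H] [Nonempty H]
    (r : RibbonGraph V H) (htree : r.IsTreeRibbon)
    (nE : ℕ) (hE : Fintype.card H = 2 * nE) :
    (∃ a b : H, ¬ ((r.ι * r.σ) ^ 2).SameCycle a b ∧
        ∀ x : H, ((r.ι * r.σ) ^ 2).SameCycle a x ∨ ((r.ι * r.σ) ^ 2).SameCycle b x) ∧
    ∀ x : H, {y : H | ((r.ι * r.σ) ^ 2).SameCycle x y}.ncard = nE := by
  classical
  set τ := r.ι * r.σ with hτdef
  have hτ : ∀ x, τ x = r.ι (r.σ x) := fun x => rfl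
  have hall : ∀ a b : H, τ.SameCycle a b := r.sameCycle_all htree
  have hfix : ∀ x : H, τ x ≠ x := by
    intro x hc
    have h1 : r.σ x = r.ι x := by
      have h2 := congrArg r.ι hc
      rw [hτ, r.ι_invol] at h2
      exact h2
    have h3 := r.s_sigma x
    rw [h1] at h3
    exact htree.2.1 x h3.symm
  have hnE : 0 < nE := by
    have := Fintype.card_pos (α := H); omega
  obtain ⟨a⟩ := ‹Nonempty H›
  have hcyc : τ.IsCycle := ⟨a, hfix a, fun y _ => hall a y⟩
  have hsupp : τ.support = Finset.univ :=
    Finset.eq_univ_iff_forall.mpr (fun x => Equiv.Perm.mem_support.mpr (hfix x))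
  have horder : orderOf τ = 2 * nE := by
    rw [hcyc.orderOf, hsupp, Finset.card_univ, hE]
  have hpow1 : τ ^ (2 * nE) = 1 := by rw [← horder]; exact pow_orderOf_eq_one τ
  have hdvd : ∀ (x : H) (m : ℕ), (τ ^ m) x = x → 2 * nE ∣ m := by
    intro x m hm
    have h1 : τ ^ m = 1 := hcyc.pow_eq_one_iff.mpr ⟨x, hfix x, hm⟩
    rw [← horder]
    exact orderOf_dvd_of_pow_eq_one h1
  have hzdvd : ∀ (x : H) (k : ℤ), (τ ^ k) x = x → ((2 * nE : ℕ) : ℤ) ∣ k := by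
    intro x k hk
    have hd : (0:ℤ) < ((2 * nE : ℕ) : ℤ) := by positivity
    have hzpow1 : τ ^ ((2 * nE : ℕ) : ℤ) = 1 := by rw [zpow_natCast, hpow1]
    have hsplit : τ ^ k = τ ^ (k % ((2 * nE : ℕ) : ℤ)) := by
      conv_lhs => rw [← Int.emod_add_mul_ediv k ((2 * nE : ℕ) : ℤ)]
      rw [zpow_add, zpow_mul, hzpow1, one_zpow, mul_one]
    rw [hsplit] at hk
    set m : ℕ := (k % ((2 * nE : ℕ) : ℤ)).toNat with hm
    have hmk : (m : ℤ) = k % ((2 * nE : ℕ) : ℤ) :=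
      Int.toNat_of_nonneg (Int.emod_nonneg k (by positivity))
    have hmx : (τ ^ m) x = x := by rw [← zpow_natCast, hmk]; exact hk
    have hdm := hdvd x m hmx
    have hlt : (m : ℤ) < ((2 * nE : ℕ) : ℤ) := by rw [hmk]; exact Int.emod_lt_of_pos k hd
    have hm0 : m = 0 := Nat.eq_zero_of_dvd_of_lt hdm (by exact_mod_cast hlt)
    have hmod : k % ((2 * nE : ℕ) : ℤ) = 0 := by rw [← hmk, hm0]; simp
    exact Int.dvd_of_emod_eq_zero hmod
  have hsq : ∀ k : ℤ, ((τ ^ 2 : Equiv.Perm H)) ^ k = τ ^ (2 * k) := by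
    intro k
    rw [← zpow_natCast τ 2, ← zpow_mul]
    norm_num
  constructor
  · refine ⟨a, τ a, ?_, ?_⟩
    · rintro ⟨k, hk⟩
      rw [hsq] at hk
      have h1 : (τ ^ (2 * k - 1 : ℤ)) a = a := by
        have h2 : τ ^ (2 * k - 1 : ℤ) = τ ^ (-1 : ℤ) * τ ^ (2 * k : ℤ) := by
          rw [← zpow_add]; ring_nf
        rw [h2, Equiv.Perm.mul_apply, hk]
        simp
      have hd := hzdvd a _ h1
      have h2 : (2 : ℤ) ∣ 2 * k - 1 := dvd_trans ⟨nE, by push_cast; ring⟩ hd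
      omega
    · intro x
      obtain ⟨n, -, hn⟩ := (hall a x).exists_pow_eq'
      rcases Nat.even_or_odd n with ⟨m, hm⟩ | ⟨m, hm⟩
      · left
        refine ⟨(m : ℤ), ?_⟩
        rw [hsq]
        have he : (2 * (m : ℤ)) = ((n : ℕ) : ℤ) := by push_cast; omega
        rw [he, zpow_natCast, hn]
      · right
        refine ⟨(m : ℤ), ?_⟩
        rw [hsq]
        have he : (2 * (m : ℤ)) = ((2 * m : ℕ) : ℤ) := by push_cast; ring
        rw [he, zpow_natCast]
        have h3 : (τ ^ (2 * m) : Equiv.Perm H) (τ a) = (τ ^ (2 * m + 1)) a := by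
          rw [pow_succ]; rfl
        rw [h3, ← hm, hn]
  · intro x
    have himg : {y : H | (τ ^ 2).SameCycle x y} =
        (fun i : Fin nE => ((τ ^ 2) ^ (i : ℕ)) x) '' Set.univ := by
      ext y
      simp only [Set.mem_setOf_eq, Set.image_univ, Set.mem_range]
      constructor
      · intro h
        obtain ⟨n, -, hn⟩ := h.exists_pow_eq'
        refine ⟨⟨n % nE, Nat.mod_lt _ hnE⟩, ?_⟩
        have hperiod : ((τ ^ 2 : Equiv.Perm H)) ^ nE = 1 := by rw [← pow_mul, hpow1]
        have hred : ((τ ^ 2 : Equiv.Perm H)) ^ n = (τ ^ 2) ^ (n % nE) := by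
          conv_lhs => rw [← Nat.mod_add_div n nE]
          rw [pow_add, pow_mul, hperiod, one_pow, mul_one]
        rw [hred] at hn
        exact hn
      · rintro ⟨i, rfl⟩
        exact ⟨(i : ℕ), by rw [zpow_natCast]⟩
    have hinj : Function.Injective (fun i : Fin nE => ((τ ^ 2) ^ (i : ℕ)) x) := by
      intro i j hij
      simp only at hij
      have e1 : (τ ^ (2 * (i : ℕ)) : Equiv.Perm H) x = (τ ^ (2 * (j : ℕ))) x := by
        rw [pow_mul, pow_mul]; exact hij
      have e2 : (τ ^ (2 * ((j : ℕ) : ℤ) - 2 * ((i : ℕ) : ℤ))) x = x := by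
        have h4 : τ ^ (2 * ((j : ℕ) : ℤ) - 2 * ((i : ℕ) : ℤ)) =
            (τ ^ (2 * ((i : ℕ) : ℤ)))⁻¹ * τ ^ (2 * ((j : ℕ) : ℤ)) := by
          rw [← zpow_neg, ← zpow_add]; ring_nf
        rw [h4, Equiv.Perm.mul_apply]
        have h5 : (τ ^ (2 * ((j : ℕ) : ℤ))) x = (τ ^ (2 * ((i : ℕ) : ℤ))) x := by
          rw [show (2 * ((j : ℕ) : ℤ)) = ((2 * (j : ℕ) : ℕ) : ℤ) by push_cast; ring,
            show (2 * ((i : ℕ) : ℤ)) = ((2 * (i : ℕ) : ℕ) : ℤ) by push_cast; ring,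
            zpow_natCast, zpow_natCast]
          exact e1.symm
        rw [h5]
        simp
      have hd := hzdvd x _ e2
      obtain ⟨c, hc⟩ := hd
      have hi := i.isLt
      have hj := j.isLt
      have hc2 : ((j : ℕ) : ℤ) - ((i : ℕ) : ℤ) = (nE : ℤ) * c := by push_cast at hc ⊢; linarith
      have hc0 : c = 0 := by
        rcases lt_trichotomy c 0 with h|h|h
        · nlinarith [hc2, (show ((j:ℕ):ℤ) ≥ 0 by positivity), (show ((i:ℕ):ℤ) < nE by exact_mod_cast hi), (show c ≤ -1 by omega)]
        · exact h
        · nlinarith [hc2, (show ((i:ℕ):ℤ) ≥ 0 by positivity), (show ((j:ℕ):ℤ) < nE by exact_mod_cast hj), (show c ≥ 1 by omega)]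
      rw [hc0, mul_zero, sub_eq_zero] at hc2
      exact Fin.ext (by exact_mod_cast hc2.symm)
    rw [himg, Set.ncard_image_of_injective _ hinj, Set.ncard_univ, Nat.card_eq_fintype_card,
      Fintype.card_fin]
end

section
/- Let Γ = (V, H, s, ι, σ) be a ribbon graph whose underlying multigraph is a tree. Then for every half-edge h ∈ H, the half-edges h and ι(h) lie in different orbits of the permutation (ι ∘ σ)². Equivalently, the involution ι interchanges the two orbits of (ι ∘ σ)². -/
open SimpleGraph in
lemma tree_twoColoring {V : Type} [DecidableEq V] (G : SimpleGraph V) (hG : G.IsTree) :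
    ∃ c : V → ZMod 2, ∀ v w, G.Adj v w → c w = c v + 1 := by
  obtain ⟨root⟩ := hG.isConnected.nonempty
  have hup : ∀ v, ∃! p : G.Walk root v, p.IsPath := fun v => hG.existsUnique_path root v
  refine ⟨fun v => ((hup v).choose.length : ZMod 2), ?_⟩
  intro v w hvw
  show (((hup w).choose.length : ZMod 2)) = ((hup v).choose.length : ZMod 2) + 1
  have hp : ((hup v).choose).IsPath := (hup v).choose_spec.1
  set p := (hup v).choose with hpdef
  have key : (hup w).choose.length = p.length + 1 ∨ p.length = (hup w).choose.length + 1 := by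
    by_cases hw : w ∈ p.support
    · have hd : (p.dropUntil w hw).IsPath := hp.dropUntil hw
      have ht : (p.takeUntil w hw).IsPath := hp.takeUntil hw
      have he : (Walk.cons hvw.symm Walk.nil : G.Walk w v).IsPath := by
        simp [Walk.cons_isPath_iff, hvw.ne']
      have hde : p.dropUntil w hw = Walk.cons hvw.symm Walk.nil := by
        have := hG.IsAcyclic.path_unique ⟨p.dropUntil w hw, hd⟩ ⟨Walk.cons hvw.symm Walk.nil, he⟩
        exact congrArg Subtype.val this
      have hlen : (p.takeUntil w hw).length + (p.dropUntil w hw).length = p.length := by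
        rw [← Walk.length_append, Walk.take_spec]
      have hPw : (hup w).choose = p.takeUntil w hw := ((hup w).choose_spec.2 _ ht).symm
      right
      rw [hPw, ← hlen, hde]
      simp
    · have hq : ((Walk.cons hvw.symm p.reverse).reverse : G.Walk root w).IsPath := by
        rw [Walk.isPath_reverse_iff, Walk.cons_isPath_iff]
        exact ⟨hp.reverse, by simpa using hw⟩
      have hPw : (hup w).choose = (Walk.cons hvw.symm p.reverse).reverse :=
        ((hup w).choose_spec.2 _ hq).symm
      left
      rw [hPw]
      simp
  rcases key with h | h
  · rw [h]; push_cast; ring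
  · rw [h]; push_cast
    rw [add_assoc, show ((1:ZMod 2)+1) = 0 from rfl, add_zero]

/-- If the underlying multigraph of a ribbon graph `(V, H, s, ι, σ)` is a tree,
then for every half-edge `h`, the half-edges `h` and `ι h` lie in different orbits of the
permutation `(ι ∘ σ)²`; i.e. `ι` interchanges the two orbits of `(ι ∘ σ)²`. -/
theorem tree_ribbon_iota_swaps_double_green_walks {V H : Type} [Fintype V] [Fintype H]
    [DecidableEq V] [DecidableEq H]
    (r : RibbonGraph V H) (htree : r.IsTreeRibbon) :
    ∀ h : H, ¬ ((r.ι * r.σ) ^ 2).SameCycle h (r.ι h) := by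
  obtain ⟨c, hc⟩ := tree_twoColoring r.underlying htree.1
  have hsσ : ∀ x, r.s (r.σ x) = r.s x :=
    fun x => ((r.orbit_fiber (r.σ x) x).mp ⟨-1, by simp⟩)
  have hadj : ∀ x, r.underlying.Adj (r.s x) (r.s (r.ι x)) := fun x =>
    (SimpleGraph.fromRel_adj _ _ _).mpr ⟨htree.2.1 x, Or.inl ⟨x, rfl, rfl⟩⟩
  set f : H → ZMod 2 := fun x => c (r.s x) with hf
  have h1 : ∀ x, f (r.ι x) = f x + 1 := fun x => hc _ _ (hadj x)
  have h2 : ∀ x, f ((r.ι * r.σ) x) = f x + 1 := by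
    intro x
    show f (r.ι (r.σ x)) = f x + 1
    rw [h1 (r.σ x)]
    show c (r.s (r.σ x)) + 1 = c (r.s x) + 1
    rw [hsσ]
  have h3 : ∀ x, f (((r.ι * r.σ) ^ 2) x) = f x := by
    intro x
    have : ((r.ι * r.σ) ^ 2) x = (r.ι * r.σ) ((r.ι * r.σ) x) := by
      rw [sq]; rfl
    rw [this, h2, h2, add_assoc, show ((1:ZMod 2)+1) = 0 from rfl, add_zero]
  have h4 : ∀ (n : ℕ) (x : H), f ((((r.ι * r.σ) ^ 2) ^ n) x) = f x := by
    intro n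
    induction n with
    | zero => simp
    | succ k ih =>
      intro x
      rw [pow_succ', Equiv.Perm.mul_apply, h3, ih]
  intro h hsc
  obtain ⟨i, _, hi⟩ := hsc.exists_pow_eq'
  have := h4 i h
  rw [hi, h1] at this
  exact one_ne_zero (α := ZMod 2) (by linear_combination this)
end
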